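/- For every integer k ≥ 1 and every real Δ with 0 < Δ < 5/4, the following finite-sum hypergeometric identity holds: Σ_{n=1}^k (−1/4)^n [(−Δ)_n ((1+Δ)/3)_n / (((5−4Δ)/6)_n n!)] · [((2n)_{2k−2n})² / ((2n+2k−1)_{2k−2n} (2k−2n)!)] · Σ_{m=0}^{2k−2n} [(2n−2k)_m (2n+2k−1)_m (n)_m] / [((2n)_m)² m!] = binom(4k−2, 2k−1)^{−1} · [Δ(1+Δ)/(5−4Δ)] · Σ_{m=0}^{k−1} [(1−k)_m (k+1/2)_m (1−Δ)_m ((4+Δ)/3)_m] / [(1)_m (2)_m ((11−4Δ)/6)_m m!]. -/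

import Mathlib

set_option linter.unusedVariables false
set_option linter.unusedTactic false
set_option maxHeartbeats 1000000


/-- Pochhammer symbol `(x)_m = x(x+1)⋯(x+m−1)`, with `(x)_0 = 1`. -/
noncomputable def poch (x : ℝ) : ℕ → ℝ
  | 0 => 1
  | m + 1 => poch x m * (x + m)

lemma poch_zero (x : ℝ) : poch x 0 = 1 := rfl
lemma poch_succ (x : ℝ) (s : ℕ) : poch x (s+1) = poch x s * (x + s) := rfl

lemma poch_succ_left (x : ℝ) (s : ℕ) : poch x (s+1) = x * poch (x+1) s := by
  induction s with
  | zero => simp [poch]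
  | succ s ih =>
    rw [poch_succ, ih, poch_succ]
    push_cast
    ring

lemma poch_pos {x : ℝ} (hx : 0 < x) (s : ℕ) : 0 < poch x s := by
  induction s with
  | zero => norm_num [poch]
  | succ s ih =>
    rw [poch_succ]
    have : (0:ℝ) ≤ s := Nat.cast_nonneg s
    exact mul_pos ih (by linarith)

lemma poch_nat (a : ℕ) (s : ℕ) : poch ((a:ℝ)+1) s = ((a+s).factorial : ℝ) / (a.factorial : ℝ) := by
  induction s with
  | zero =>
    have h2 : (a.factorial : ℝ) ≠ 0 := Nat.cast_ne_zero.mpr (Nat.factorial_ne_zero a)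
    simp [poch, div_self h2]
  | succ s ih =>
    rw [poch_succ, ih]
    have h1 : a + (s+1) = (a+s) + 1 := by ring
    rw [h1, Nat.factorial_succ]
    have h2 : (a.factorial : ℝ) ≠ 0 := Nat.cast_ne_zero.mpr (Nat.factorial_ne_zero a)
    push_cast
    field_simp
    ring

lemma poch_half (a s : ℕ) :
    poch ((a:ℝ)+1/2) s = ((2*a+2*s).factorial : ℝ) * (a.factorial : ℝ)
      / ((2*a).factorial * ((a+s).factorial : ℝ) * 4^s) := by
  induction s with
  | zero =>
    have h : (((2*a).factorial : ℝ)) ≠ 0 := Nat.cast_ne_zero.mpr (Nat.factorial_ne_zero _)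
    have h2 : ((a.factorial : ℝ)) ≠ 0 := Nat.cast_ne_zero.mpr (Nat.factorial_ne_zero _)
    simp [poch]
    field_simp
  | succ s ih =>
    rw [poch_succ, ih]
    have h1 : 2*a + 2*(s+1) = (2*a+2*s) + 1 + 1 := by ring
    have h2 : a + (s+1) = (a+s) + 1 := by ring
    rw [h1, h2, Nat.factorial_succ, Nat.factorial_succ, Nat.factorial_succ]
    have hA : ((2*a).factorial : ℝ) ≠ 0 := Nat.cast_ne_zero.mpr (Nat.factorial_ne_zero _)
    have hB : (((a+s)).factorial : ℝ) ≠ 0 := Nat.cast_ne_zero.mpr (Nat.factorial_ne_zero _)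
    have hC : ((2*a+2*s).factorial : ℝ) ≠ 0 := Nat.cast_ne_zero.mpr (Nat.factorial_ne_zero _)
    have h4 : (4:ℝ)^s ≠ 0 := by positivity
    push_cast
    field_simp
    ring

lemma poch_neg_mul (a : ℕ) : ∀ s : ℕ, s ≤ a →
    poch (-(a:ℝ)) s * (((a-s).factorial : ℕ) : ℝ) = (-1)^s * (a.factorial : ℝ) := by
  intro s
  induction s with
  | zero => simp [poch]
  | succ s ih =>
    intro hs
    have hs' : s ≤ a := Nat.le_of_succ_le hs
    have h1 : a - s = (a - (s+1)) + 1 := by omega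
    have key := ih hs'
    rw [h1, Nat.factorial_succ, Nat.cast_mul, Nat.cast_add, Nat.cast_one] at key
    have h3 : ((a - (s+1) : ℕ) : ℝ) = (a:ℝ) - (s:ℝ) - 1 := by
      have : (a - (s+1)) + (s+1) = a := by omega
      have := congrArg (fun t : ℕ => (t:ℝ)) this
      push_cast at this
      linarith
    rw [poch_succ]
    rw [h3] at key
    linear_combination (-1 : ℝ) * key

lemma poch_neg (a : ℕ) (s : ℕ) (h : s ≤ a) :
    poch (-(a:ℝ)) s = (-1)^s * ((a.factorial : ℝ) / ((a-s).factorial : ℝ)) := by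
  have h2 : (((a-s).factorial : ℕ) : ℝ) ≠ 0 := Nat.cast_ne_zero.mpr (Nat.factorial_ne_zero _)
  have := poch_neg_mul a s h
  field_simp
  linarith [this]

lemma poch_eq_zero_extend (x : ℝ) (s t : ℕ) (h : poch x s = 0) : poch x (s+t) = 0 := by
  induction t with
  | zero => exact h
  | succ t ih => rw [show s + (t+1) = (s+t)+1 from rfl, poch_succ, ih, zero_mul]

lemma poch_neg_eq_zero (a s : ℕ) (h : a < s) : poch (-(a:ℝ)) s = 0 := by
  have h1 : poch (-(a:ℝ)) (a+1) = 0 := by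
    rw [poch_succ]; simp
  have h2 : s = (a+1) + (s - (a+1)) := by omega
  rw [h2]
  exact poch_eq_zero_extend _ _ _ h1

noncomputable def wf (n j m : ℕ) : ℝ :=
  poch (-(2*(j:ℝ))) m * poch (4*(n:ℝ)+2*(j:ℝ)-1) m * poch (n:ℝ) m
    / (poch (2*(n:ℝ)) m ^2 * (m.factorial : ℝ))

noncomputable def wg (n j : ℕ) : ℝ :=
  poch (1/2) j * poch (n:ℝ) j / (poch ((n:ℝ)+1/2) j * poch (2*(n:ℝ)) j)

noncomputable def wr (n j : ℕ) : ℝ :=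
  ((2*(j:ℝ)+1)*((n:ℝ)+(j:ℝ))) / ((2*(n:ℝ)+2*(j:ℝ)+1)*(2*(n:ℝ)+(j:ℝ)))

noncomputable def wH (n j m : ℕ) : ℝ :=
  (-(m:ℝ)*(2*(n:ℝ)+(m:ℝ)-1)^2*(4*(n:ℝ)+4*(j:ℝ)+1)*(2*(j:ℝ)+1))
      / ((4*(n:ℝ)+2*(j:ℝ)-1)*(2*(n:ℝ)+2*(j:ℝ)+1)*(2*(n:ℝ)+(j:ℝ)))
    * poch (-(2*(j:ℝ))) (m-2) * poch (4*(n:ℝ)+2*(j:ℝ)-1) m * poch (n:ℝ) m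
    / (poch (2*(n:ℝ)) m ^2 * (m.factorial : ℝ))

section facts
variable (n j : ℕ) (hn : 1 ≤ n)

lemma hn1 (hn : 1 ≤ n) : (1:ℝ) ≤ (n:ℝ) := by exact_mod_cast hn

lemma wg_ratio (hn : 1 ≤ n) : wg n (j+1) = wr n j * wg n j := by
  have h1 : (1:ℝ) ≤ (n:ℝ) := by exact_mod_cast hn
  have hj : (0:ℝ) ≤ (j:ℝ) := Nat.cast_nonneg j
  unfold wg wr
  push_cast
  rw [poch_succ, poch_succ, poch_succ, poch_succ]
  have p1 : 0 < poch ((n:ℝ)+1/2) j := poch_pos (by linarith) j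
  have p2 : 0 < poch (2*(n:ℝ)) j := poch_pos (by linarith) j
  have d1 : (2*(n:ℝ)+2*(j:ℝ)+1) ≠ 0 := by linarith
  have d2 : (2*(n:ℝ)+(j:ℝ)) ≠ 0 := by linarith
  have d3 : ((n:ℝ)+1/2+(j:ℝ)) ≠ 0 := by linarith
  field_simp
  ring

end facts

lemma wz_base (n j : ℕ) (hn : 1 ≤ n) :
    (wf n (j+1) 0 - wr n j * wf n j 0) + (wf n (j+1) 1 - wr n j * wf n j 1)
      = wH n j 2 := by
  have h1 : (1:ℝ) ≤ (n:ℝ) := by exact_mod_cast hn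
  have hj : (0:ℝ) ≤ (j:ℝ) := Nat.cast_nonneg j
  unfold wf wr wH
  push_cast
  simp only [poch_succ, poch_zero]
  norm_num
  have d1 : (2*(n:ℝ)+2*(j:ℝ)+1) ≠ 0 := by linarith
  have d2 : (2*(n:ℝ)+(j:ℝ)) ≠ 0 := by linarith
  have d3 : (4*(n:ℝ)+2*(j:ℝ)-1) ≠ 0 := by linarith
  have d4 : (n:ℝ) ≠ 0 := by linarith
  have d5 : (2*(n:ℝ)+1) ≠ 0 := by linarith
  have d6 : ((n:ℝ)*4+2*(j:ℝ)-1) ≠ 0 := by linarith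
  field_simp
  ring

lemma wz_step (n j i : ℕ) (hn : 1 ≤ n) :
    wf n (j+1) (i+2) - wr n j * wf n j (i+2) = wH n j (i+3) - wH n j (i+2) := by
  have h1 : (1:ℝ) ≤ (n:ℝ) := by exact_mod_cast hn
  have hj : (0:ℝ) ≤ (j:ℝ) := Nat.cast_nonneg j
  have hi : (0:ℝ) ≤ (i:ℝ) := Nat.cast_nonneg i
  set b : ℝ := 4*(n:ℝ)+2*(j:ℝ)-1 with hb
  set A : ℝ := poch (-(2*(j:ℝ))) i with hA
  set B : ℝ := poch b (i+2) with hB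
  set C : ℝ := poch (n:ℝ) (i+2) with hC
  set D : ℝ := poch (2*(n:ℝ)) (i+2) with hD
  set E : ℝ := ((i+2).factorial : ℝ) with hE
  have hbpos : 0 < b := by rw [hb]; linarith
  have hb0 : b ≠ 0 := ne_of_gt hbpos
  have hb1 : b + 1 ≠ 0 := by linarith
  have hDpos : 0 < D := poch_pos (by linarith) _
  have hD0 : D ≠ 0 := ne_of_gt hDpos
  have hE0 : E ≠ 0 := Nat.cast_ne_zero.mpr (Nat.factorial_ne_zero _)
  have e1 : poch (-(2*(j:ℝ))-2) (i+2) = (-(2*(j:ℝ))-2) * (-(2*(j:ℝ))-1) * A := by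
    rw [poch_succ_left]
    have t2 : (-(2*(j:ℝ))-2) + 1 = (-(2*(j:ℝ))-1) := by ring
    rw [t2, poch_succ_left]
    have t3 : (-(2*(j:ℝ))-1) + 1 = -(2*(j:ℝ)) := by ring
    rw [t3, hA]; ring
  have e2 : poch (b+2) (i+2) = B * (b+(i:ℝ)+2) * (b+(i:ℝ)+3) / (b*(b+1)) := by
    have two : poch b (i+4) = b * (b+1) * poch (b+2) (i+2) := by
      rw [show i+4 = (i+3)+1 from rfl, poch_succ_left,
          show i+3 = (i+2)+1 from rfl, poch_succ_left]
      have : b + 1 + 1 = b + 2 := by ring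
      rw [this]; ring
    have one : poch b (i+4) = B * (b+(i:ℝ)+2) * (b+(i:ℝ)+3) := by
      rw [show i+4 = (i+3)+1 from rfl, poch_succ, show i+3 = (i+2)+1 from rfl, poch_succ, ← hB]
      push_cast; ring
    rw [eq_div_iff (by positivity)]
    rw [← one, two]; ring
  have e3 : poch (-(2*(j:ℝ))) (i+2) = A * (-(2*(j:ℝ))+(i:ℝ)) * (-(2*(j:ℝ))+(i:ℝ)+1) := by
    rw [show i+2 = (i+1)+1 from rfl, poch_succ, poch_succ, ← hA]
    push_cast; ring
  have e4 : poch (-(2*(j:ℝ))) (i+1) = A * (-(2*(j:ℝ))+(i:ℝ)) := by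
    rw [poch_succ, ← hA]
  have e5 : poch b (i+3) = B * (b+(i:ℝ)+2) := by
    rw [show i+3 = (i+2)+1 from rfl, poch_succ, ← hB]; push_cast; ring
  have e6 : poch (n:ℝ) (i+3) = C * ((n:ℝ)+(i:ℝ)+2) := by
    rw [show i+3 = (i+2)+1 from rfl, poch_succ, ← hC]; push_cast; ring
  have e7 : poch (2*(n:ℝ)) (i+3) = D * (2*(n:ℝ)+(i:ℝ)+2) := by
    rw [show i+3 = (i+2)+1 from rfl, poch_succ, ← hD]; push_cast; ring
  have eE : (((i+3).factorial : ℕ) : ℝ) = ((i:ℝ)+3) * E := by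
    rw [show i+3 = (i+2)+1 from rfl, Nat.factorial_succ, hE]; push_cast; ring
  -- now express all four quantities
  have F1 : wf n (j+1) (i+2)
      = ((-(2*(j:ℝ))-2) * (-(2*(j:ℝ))-1) * A) * (B * (b+(i:ℝ)+2) * (b+(i:ℝ)+3) / (b*(b+1))) * C
        / (D^2 * E) := by
    unfold wf
    have a1 : -(2*(((j:ℕ)+1:ℕ):ℝ)) = -(2*(j:ℝ))-2 := by push_cast; ring
    have a2 : 4*(n:ℝ)+2*(((j:ℕ)+1:ℕ):ℝ)-1 = b+2 := by rw [hb]; push_cast; ring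
    rw [a1, a2, e1, e2, ← hC, ← hD, ← hE]
  have F2 : wf n j (i+2)
      = (A * (-(2*(j:ℝ))+(i:ℝ)) * (-(2*(j:ℝ))+(i:ℝ)+1)) * B * C / (D^2 * E) := by
    unfold wf
    rw [e3, ← hb, ← hB, ← hC, ← hD, ← hE]
  have F3 : wH n j (i+2)
      = (-((i:ℝ)+2)*(2*(n:ℝ)+((i:ℝ)+2)-1)^2*(4*(n:ℝ)+4*(j:ℝ)+1)*(2*(j:ℝ)+1))
          / (b*(2*(n:ℝ)+2*(j:ℝ)+1)*(2*(n:ℝ)+(j:ℝ)))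
        * A * B * C / (D^2 * E) := by
    unfold wH
    rw [show (i+2)-2 = i from by omega, ← hA, ← hb, ← hB, ← hC, ← hD, ← hE]
    push_cast; ring
  have F4 : wH n j (i+3)
      = (-((i:ℝ)+3)*(2*(n:ℝ)+((i:ℝ)+3)-1)^2*(4*(n:ℝ)+4*(j:ℝ)+1)*(2*(j:ℝ)+1))
          / (b*(2*(n:ℝ)+2*(j:ℝ)+1)*(2*(n:ℝ)+(j:ℝ)))
        * (A * (-(2*(j:ℝ))+(i:ℝ))) * (B * (b+(i:ℝ)+2)) * (C * ((n:ℝ)+(i:ℝ)+2))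
        / ((D * (2*(n:ℝ)+(i:ℝ)+2))^2 * (((i:ℝ)+3) * E)) := by
    unfold wH
    rw [show (i+3)-2 = i+1 from by omega, e4, ← hb, e5, e6, e7, eE]
    push_cast; ring
  rw [F1, F2, F3, F4]
  unfold wr
  have d1 : (2*(n:ℝ)+2*(j:ℝ)+1) ≠ 0 := by linarith
  have d2 : (2*(n:ℝ)+(j:ℝ)) ≠ 0 := by linarith
  have d3 : (2*(n:ℝ)+(i:ℝ)+2) ≠ 0 := by linarith
  have d4 : ((i:ℝ)+3) ≠ 0 := by linarith
  field_simp
  ring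

lemma wz_partial (n j : ℕ) (hn : 1 ≤ n) : ∀ M : ℕ,
    ∑ m ∈ Finset.range (M+2), (wf n (j+1) m - wr n j * wf n j m) = wH n j (M+2) := by
  intro M
  induction M with
  | zero =>
    rw [Finset.sum_range_succ, Finset.sum_range_one]
    exact wz_base n j hn
  | succ M ih =>
    rw [show M+1+2 = (M+2)+1 from rfl, Finset.sum_range_succ, ih, wz_step n j M hn]
    ring

lemma wf_vanish (n j m : ℕ) (h : 2*j < m) : wf n j m = 0 := by
  unfold wf
  have : -(2*(j:ℝ)) = -((2*j : ℕ) : ℝ) := by push_cast; ring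
  rw [this, poch_neg_eq_zero _ _ h]
  simp

lemma wH_top (n j : ℕ) : wH n j (2*j+3) = 0 := by
  unfold wH
  have h1 : (2*j+3)-2 = 2*j+1 := by omega
  have h2 : -(2*(j:ℝ)) = -((2*j : ℕ) : ℝ) := by push_cast; ring
  rw [h1, h2, poch_neg_eq_zero _ _ (by omega)]
  simp

theorem watson (n : ℕ) (hn : 1 ≤ n) (j : ℕ) :
    ∑ m ∈ Finset.range (2*j+1), wf n j m = wg n j := by
  induction j with
  | zero =>
    rw [show 2*0+1 = 1 from rfl, Finset.sum_range_one]
    unfold wf wg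
    simp [poch]
  | succ j ih =>
    have key := wz_partial n j hn (2*j+1)
    rw [show 2*j+1+2 = 2*j+3 from rfl, wH_top, Finset.sum_sub_distrib, ← Finset.mul_sum] at key
    have drop : ∑ m ∈ Finset.range (2*j+3), wf n j m = ∑ m ∈ Finset.range (2*j+1), wf n j m := by
      rw [show 2*j+3 = (2*j+2)+1 from rfl, Finset.sum_range_succ,
          show 2*j+2 = (2*j+1)+1 from rfl, Finset.sum_range_succ,
          wf_vanish n j (2*j+1) (by omega), wf_vanish n j (2*j+2) (by omega)]
      ring
    rw [drop, ih] at key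
    have : ∑ m ∈ Finset.range (2*(j+1)+1), wf n (j+1) m = wr n j * wg n j := by
      rw [show 2*(j+1)+1 = 2*j+3 from rfl]
      linarith [key]
    rw [this, ← wg_ratio n j hn]

lemma lemB (m j : ℕ) :
    (-1/4 : ℝ)^(m+1)
      * ((poch (2*((m:ℝ)+1)) (2*j))^2
          / (poch (4*((m:ℝ)+1)+2*(j:ℝ)-1) (2*j) * ((2*j).factorial : ℝ)))
      * wg (m+1) j / (((m+1).factorial : ℝ))
    = ((Nat.choose (4*(m+1+j)-2) (2*(m+1+j)-1) : ℝ))⁻¹ * (-1/2)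
      * (poch (1-((m+1+j:ℕ):ℝ)) m * poch (((m+1+j:ℕ):ℝ)+1/2) m)
      / ((m.factorial : ℝ) * (((m+1).factorial : ℝ)) * (m.factorial : ℝ)) := by
  -- poch (2(m+1)) (2j)
  have P1 : poch (2*((m:ℝ)+1)) (2*j) = (((2*m+2*j+1).factorial : ℝ))/(((2*m+1).factorial : ℝ)) := by
    have h := poch_nat (2*m+1) (2*j)
    rw [show 2*m+1+2*j = 2*m+2*j+1 from by omega] at h
    rw [show 2*((m:ℝ)+1) = ((2*m+1 : ℕ):ℝ)+1 from by push_cast; ring, h]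
  -- poch (4(m+1)+2j-1) (2j)
  have P2 : poch (4*((m:ℝ)+1)+2*(j:ℝ)-1) (2*j)
      = (((4*m+4*j+2).factorial : ℝ))/(((4*m+2*j+2).factorial : ℝ)) := by
    have h := poch_nat (4*m+2*j+2) (2*j)
    rw [show 4*m+2*j+2+2*j = 4*m+4*j+2 from by omega] at h
    rw [show 4*((m:ℝ)+1)+2*(j:ℝ)-1 = ((4*m+2*j+2 : ℕ):ℝ)+1 from by push_cast; ring, h]
  -- wg pieces
  have P3 : poch (1/2 : ℝ) j = (((2*j).factorial : ℝ))/((j.factorial : ℝ) * 4^j) := by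
    have h := poch_half 0 j
    rw [show ((0:ℕ):ℝ)+1/2 = (1/2 : ℝ) from by norm_num] at h
    rw [h]
    simp
  have P4 : poch (((m+1:ℕ)):ℝ) j = (((m+j).factorial : ℝ))/((m.factorial : ℝ)) := by
    have h := poch_nat m j
    rw [show (((m+1:ℕ)):ℝ) = ((m:ℕ):ℝ)+1 from by push_cast; ring, h]
  have P5 : poch ((((m+1:ℕ)):ℝ)+1/2) j
      = (((2*m+2*j+2).factorial : ℝ)) * (((m+1).factorial : ℝ))
        / (((2*m+2).factorial : ℝ) * (((m+j+1).factorial : ℝ)) * 4^j) := by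
    have h := poch_half (m+1) j
    rw [show 2*(m+1)+2*j = 2*m+2*j+2 from by omega, show 2*(m+1) = 2*m+2 from by omega,
        show m+1+j = m+j+1 from by omega] at h
    rw [show (((m+1:ℕ)):ℝ) = ((m+1:ℕ):ℝ) from rfl, h]
  have P6 : poch (2*(((m+1:ℕ)):ℝ)) j = (((2*m+j+1).factorial : ℝ))/(((2*m+1).factorial : ℝ)) := by
    have h := poch_nat (2*m+1) j
    rw [show 2*m+1+j = 2*m+j+1 from by omega] at h
    rw [show 2*(((m+1:ℕ)):ℝ) = ((2*m+1 : ℕ):ℝ)+1 from by push_cast; ring, h]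
  -- choose
  have PC : ((Nat.choose (4*(m+1+j)-2) (2*(m+1+j)-1)) : ℝ)
      = (((4*m+4*j+2).factorial : ℝ)) / ((((2*m+2*j+1).factorial : ℝ)) * (((2*m+2*j+1).factorial : ℝ))) := by
    have h1 : 4*(m+1+j)-2 = 4*m+4*j+2 := by omega
    have h2 : 2*(m+1+j)-1 = 2*m+2*j+1 := by omega
    rw [h1, h2]
    have h3 : 2*m+2*j+1 ≤ 4*m+4*j+2 := by omega
    have h4 := Nat.choose_mul_factorial_mul_factorial h3
    rw [show 4*m+4*j+2 - (2*m+2*j+1) = 2*m+2*j+1 from by omega] at h4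
    have := congrArg (fun t : ℕ => (t:ℝ)) h4
    push_cast at this
    field_simp
    linarith [this]
  -- poch (1-k) m
  have P7 : poch (1-((m+1+j:ℕ):ℝ)) m
      = (-1)^m * ((((m+j).factorial : ℝ))/((j.factorial : ℝ))) := by
    have h := poch_neg (m+j) m (by omega)
    rw [show (m+j)-m = j from by omega] at h
    rw [show 1-((m+1+j:ℕ):ℝ) = -(((m+j:ℕ)):ℝ) from by push_cast; ring, h]
  -- poch (k+1/2) m
  have P8 : poch (((m+1+j:ℕ):ℝ)+1/2) m
      = (((4*m+2*j+2).factorial : ℝ)) * (((m+j+1).factorial : ℝ))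
        / ((((2*m+2*j+2).factorial : ℝ)) * (((2*m+j+1).factorial : ℝ)) * 4^m) := by
    have h := poch_half (m+1+j) m
    rw [show 2*(m+1+j)+2*m = 4*m+2*j+2 from by omega, show 2*(m+1+j) = 2*m+2*j+2 from by omega,
        show m+1+j+m = 2*m+j+1 from by omega, show m+1+j = m+j+1 from by omega] at h
    rw [show ((m+1+j:ℕ):ℝ) = ((m+j+1:ℕ):ℝ) from by push_cast; ring, h]
  unfold wg
  push_cast at P4 P5 P6 P7 P8 ⊢
  rw [P1, P2, P3, P4, P5, P6, PC, P7, P8]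
  -- reductions
  have R1 : (((m+1).factorial : ℕ) : ℝ) = ((m:ℝ)+1) * (m.factorial : ℝ) := by
    rw [Nat.factorial_succ]; push_cast; ring
  have R2 : (((2*m+2).factorial : ℕ) : ℝ) = (2*(m:ℝ)+2) * (((2*m+1).factorial : ℕ) : ℝ) := by
    rw [show 2*m+2 = (2*m+1)+1 from by omega, Nat.factorial_succ]; push_cast; ring
  rw [R1, R2]
  have Q : (-1/4 : ℝ)^(m+1) = ((-1:ℝ)^m * (-1)) / ((4:ℝ)^m * 4) := by
    rw [pow_succ, div_pow]
    ring
  rw [Q]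
  have N1 : ((m.factorial : ℕ) : ℝ) ≠ 0 := Nat.cast_ne_zero.mpr (Nat.factorial_ne_zero _)
  have N2 : ((j.factorial : ℕ) : ℝ) ≠ 0 := Nat.cast_ne_zero.mpr (Nat.factorial_ne_zero _)
  have N3 : (((2*j).factorial : ℕ) : ℝ) ≠ 0 := Nat.cast_ne_zero.mpr (Nat.factorial_ne_zero _)
  have N4 : (((2*m+1).factorial : ℕ) : ℝ) ≠ 0 := Nat.cast_ne_zero.mpr (Nat.factorial_ne_zero _)
  have N5 : (((m+j).factorial : ℕ) : ℝ) ≠ 0 := Nat.cast_ne_zero.mpr (Nat.factorial_ne_zero _)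
  have N6 : (((m+j+1).factorial : ℕ) : ℝ) ≠ 0 := Nat.cast_ne_zero.mpr (Nat.factorial_ne_zero _)
  have N7 : (((2*m+j+1).factorial : ℕ) : ℝ) ≠ 0 := Nat.cast_ne_zero.mpr (Nat.factorial_ne_zero _)
  have N8 : (((2*m+2*j+1).factorial : ℕ) : ℝ) ≠ 0 := Nat.cast_ne_zero.mpr (Nat.factorial_ne_zero _)
  have N9 : (((2*m+2*j+2).factorial : ℕ) : ℝ) ≠ 0 := Nat.cast_ne_zero.mpr (Nat.factorial_ne_zero _)
  have N10 : (((4*m+2*j+2).factorial : ℕ) : ℝ) ≠ 0 := Nat.cast_ne_zero.mpr (Nat.factorial_ne_zero _)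
  have N11 : (((4*m+4*j+2).factorial : ℕ) : ℝ) ≠ 0 := Nat.cast_ne_zero.mpr (Nat.factorial_ne_zero _)
  have N12 : (4:ℝ)^m ≠ 0 := by positivity
  have N13 : (4:ℝ)^j ≠ 0 := by positivity
  have N14 : ((m:ℝ)+1) ≠ 0 := by positivity
  have N15 : (2*(m:ℝ)+2) ≠ 0 := by positivity
  field_simp
  ring


lemma poch_one_nat (m : ℕ) : poch (1:ℝ) m = (m.factorial : ℝ) := by
  have h := poch_nat 0 m
  norm_num at h
  exact h

lemma poch_two_nat (m : ℕ) : poch (2:ℝ) m = ((m+1).factorial : ℝ) := by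
  have h := poch_nat 1 m
  rw [show ((1:ℕ):ℝ)+1 = (2:ℝ) from by norm_num, show 1+m = m+1 from by omega,
      Nat.factorial_one] at h
  rw [h]
  simp

lemma delta_part (Δ : ℝ) (hΔ0 : 0 < Δ) (hΔ1 : Δ < 5/4) (m : ℕ) :
    Δ*(1+Δ)/(5-4*Δ) * (poch (1-Δ) m * poch ((4+Δ)/3) m / poch ((11-4*Δ)/6) m)
    = -(1/2) * (poch (-Δ) (m+1) * poch ((1+Δ)/3) (m+1) / poch ((5-4*Δ)/6) (m+1)) := by
  rw [poch_succ_left (-Δ) m, poch_succ_left ((1+Δ)/3) m, poch_succ_left ((5-4*Δ)/6) m]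
  rw [show -Δ+1 = 1-Δ from by ring, show (1+Δ)/3+1 = (4+Δ)/3 from by ring,
      show (5-4*Δ)/6+1 = (11-4*Δ)/6 from by ring]
  have p1 : 0 < poch ((11-4*Δ)/6) m := poch_pos (by linarith) m
  have d1 : (5-4*Δ) ≠ 0 := by linarith
  have d2 : (5-4*Δ)/6 ≠ 0 := by intro h; apply d1; linarith
  field_simp
  ring


/-- Finite-sum hypergeometric identity expressing the sl(2) block coefficients
of the Virasoro identity block of `⟨σσσσ⟩` in closed ₄F₃ (Wilson polynomial) form. -/
theorem stmt_6 (k : ℕ) (hk : 1 ≤ k) (Δ : ℝ) (hΔ0 : 0 < Δ) (hΔ1 : Δ < 5/4) :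
    ∑ n ∈ Finset.Icc 1 k,
      ((-1/4 : ℝ))^n
        * (poch (-Δ) n * poch ((1 + Δ)/3) n / (poch ((5 - 4*Δ)/6) n * (n.factorial : ℝ)))
        * ((poch (2*(n : ℝ)) (2*k - 2*n))^2
            / (poch (2*(n : ℝ) + 2*(k : ℝ) - 1) (2*k - 2*n) * ((2*k - 2*n).factorial : ℝ)))
        * ∑ m ∈ Finset.range (2*k - 2*n + 1),
            (poch (2*(n : ℝ) - 2*(k : ℝ)) m * poch (2*(n : ℝ) + 2*(k : ℝ) - 1) m * poch (n : ℝ) m)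
            / ((poch (2*(n : ℝ)) m)^2 * (m.factorial : ℝ))
    = ((Nat.choose (4*k - 2) (2*k - 1) : ℝ))⁻¹ * (Δ * (1 + Δ) / (5 - 4*Δ)) *
        ∑ m ∈ Finset.range k,
          (poch (1 - (k : ℝ)) m * poch ((k : ℝ) + 1/2) m * poch (1 - Δ) m * poch ((4 + Δ)/3) m)
          / (poch 1 m * poch 2 m * poch ((11 - 4*Δ)/6) m * (m.factorial : ℝ)) := by
  rw [← Finset.Ico_add_one_right_eq_Icc, Finset.sum_Ico_eq_sum_range,
      show k+1-1 = k from by omega, Finset.mul_sum]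
  apply Finset.sum_congr rfl
  intro m hm
  have hmk : m < k := Finset.mem_range.mp hm
  rw [show 1+m = m+1 from by omega]
  set j : ℕ := k - m - 1 with hj
  have hkj : k = m+1+j := by omega
  rw [hkj]
  -- normalize the inner sum bounds and pochhammer arguments
  rw [show 2*(m+1+j) - 2*(m+1) = 2*j from by omega]
  -- inner sum = ∑ wf (m+1) j
  have hinner : ∑ i ∈ Finset.range (2*j+1),
      (poch (2*((m+1:ℕ) : ℝ) - 2*((m+1+j:ℕ) : ℝ)) i * poch (2*((m+1:ℕ) : ℝ) + 2*((m+1+j:ℕ) : ℝ) - 1) i * poch ((m+1:ℕ) : ℝ) i)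
        / ((poch (2*((m+1:ℕ) : ℝ)) i)^2 * (i.factorial : ℝ))
      = ∑ i ∈ Finset.range (2*j+1), wf (m+1) j i := by
    apply Finset.sum_congr rfl
    intro i _
    unfold wf
    rw [show 2*((m+1:ℕ) : ℝ) - 2*((m+1+j:ℕ) : ℝ) = -(2*(j:ℝ)) from by push_cast; ring,
        show 2*((m+1:ℕ) : ℝ) + 2*((m+1+j:ℕ) : ℝ) - 1 = 4*((m+1:ℕ):ℝ)+2*(j:ℝ)-1 from by push_cast; ring]
  rw [hinner, watson (m+1) (by omega) j]
  -- delta part and coefficient part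
  have hd := delta_part Δ hΔ0 hΔ1 m
  have hb := lemB m j
  rw [poch_one_nat, poch_two_nat]
  -- align argument forms
  rw [show 2*((m+1:ℕ) : ℝ) + 2*((m+1+j:ℕ) : ℝ) - 1 = 4*((m:ℝ)+1)+2*(j:ℝ)-1 from by push_cast; ring,
      show 2*((m+1:ℕ) : ℝ) = 2*((m:ℝ)+1) from by push_cast; ring]
  push_cast
  push_cast at hb hd
  linear_combination
    (poch (-Δ) (m+1) * poch ((1+Δ)/3) (m+1) / poch ((5-4*Δ)/6) (m+1)) * hb
    - (((Nat.choose (4*(m+1+j)-2) (2*(m+1+j)-1) : ℝ))⁻¹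
        * poch (1-((m:ℝ)+1+(j:ℝ))) m * poch (((m:ℝ)+1+(j:ℝ))+1/2) m
        / ((m.factorial : ℝ) * (((m+1).factorial : ℝ)) * (m.factorial : ℝ))) * hd
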